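/- Let (G,L,v) be a reachable triple and let i ∈ {1,2,3,4} be any color. Then 0 ≤ Pr_{G,L}[c(v)=i] ≤ 1/2. -/

import Mathlib

open Finset

variable {V : Type} [Fintype V] [DecidableEq V]

/-- The set of proper colorings of the list-coloring instance `(G, L)` with colors `Fin 4`. -/
def properColorings (G : SimpleGraph V) [DecidableRel G.Adj]
    (L : V → Finset (Fin 4)) : Finset (V → Fin 4) :=
  Finset.univ.filter
    (fun c => (∀ u, c u ∈ L u) ∧ ∀ u w : V, G.Adj u w → c u ≠ c w)

/-- The marginal probability `Pr_{G,L}[c(v) = i]` under the uniform distribution on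
proper colorings of `(G, L)`. -/
noncomputable def margin (G : SimpleGraph V) [DecidableRel G.Adj]
    (L : V → Finset (Fin 4)) (v : V) (i : Fin 4) : ℝ :=
  (((properColorings G L).filter (fun c => c v = i)).card : ℝ) /
    ((properColorings G L).card : ℝ)

/-- The triple `(G, L, v)` is reachable: every vertex has degree at most `3` and list size
at least its degree plus one, `v` has degree at most `2` and list size at least its degree
plus two. -/
def Reachable4 (G : SimpleGraph V) [DecidableRel G.Adj]
    (L : V → Finset (Fin 4)) (v : V) : Prop :=
  (∀ u : V, G.degree u ≤ 3 ∧ G.degree u + 1 ≤ (L u).card) ∧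
    G.degree v ≤ 2 ∧ G.degree v + 2 ≤ (L v).card

/-- If `(G, L, v)` is reachable then `0 ≤ Pr_{G,L}[c(v)=i] ≤ 1/2` for every color `i`. -/
theorem marginal_upper_bound (G : SimpleGraph V) [DecidableRel G.Adj]
    (L : V → Finset (Fin 4)) (v : V) (hreach : Reachable4 G L v) (i : Fin 4) :
    0 ≤ margin G L v i ∧ margin G L v i ≤ 1 / 2 := by
  obtain ⟨-, hdegv, hLv⟩ := hreach
  -- available recoloring colors for `v` given a coloring `c`
  set avail : (V → Fin 4) → Finset (Fin 4) :=
    fun c => L v \ insert i ((G.neighborFinset v).image c) with havail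
  have hne : ∀ c : V → Fin 4, (avail c).Nonempty := by
    intro c
    rw [← Finset.card_pos]
    have h1 : (insert i ((G.neighborFinset v).image c)).card ≤ G.degree v + 1 := by
      calc (insert i ((G.neighborFinset v).image c)).card
          ≤ ((G.neighborFinset v).image c).card + 1 := Finset.card_insert_le _ _
        _ ≤ G.degree v + 1 := by
            have := Finset.card_image_le (s := G.neighborFinset v) (f := c)
            rw [G.card_neighborFinset_eq_degree] at this
            omega
    have h2 := Finset.le_card_sdiff (insert i ((G.neighborFinset v).image c)) (L v)
    simp only [havail]
    omega
  -- the injection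
  set f : (V → Fin 4) → (V → Fin 4) :=
    fun c => Function.update c v ((avail c).min' (hne c)) with hf
  have key : ((properColorings G L).filter (fun c => c v = i)).card ≤
      ((properColorings G L).filter (fun c => ¬ c v = i)).card := by
    apply Finset.card_le_card_of_injOn f
    · intro c hc
      simp only [properColorings, Finset.mem_coe, Finset.mem_filter, Finset.mem_univ, true_and] at hc ⊢
      obtain ⟨⟨hmem, hadj⟩, hcv⟩ := hc
      have hmin := (avail c).min'_mem (hne c)
      simp only [havail, Finset.mem_sdiff, Finset.mem_insert, Finset.mem_image,
        SimpleGraph.mem_neighborFinset, not_or, not_exists] at hmin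
      obtain ⟨hminL, hmini, hminN⟩ := hmin
      refine ⟨⟨?_, ?_⟩, ?_⟩
      · intro u
        by_cases hu : u = v
        · subst hu; simpa [hf] using hminL
        · simpa [hf, Function.update_of_ne hu] using hmem u
      · intro u w huw
        have hne' : u ≠ w := G.ne_of_adj huw
        by_cases hu : u = v
        · have hwv : w ≠ v := fun h => hne' (hu.trans h.symm)
          rw [hu]
          simp only [hf, Function.update_self, Function.update_of_ne hwv]
          intro h
          exact hminN w ⟨by rwa [hu] at huw, h.symm⟩
        · by_cases hw : w = v
          · rw [hw]
            simp only [hf, Function.update_self, Function.update_of_ne hu]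
            intro h
            exact hminN u ⟨by rw [hw] at huw; exact huw.symm, h⟩
          · simpa [hf, Function.update_of_ne hu, Function.update_of_ne hw] using hadj u w huw
      · simp only [hf, Function.update_self]
        exact hmini
    · intro c hc c' hc' hcc
      simp only [properColorings, Finset.mem_coe, Finset.mem_filter] at hc hc'
      funext u
      by_cases hu : u = v
      · subst hu; rw [hc.2, hc'.2]
      · have := congrFun hcc u
        simpa [hf, Function.update_of_ne hu] using this
  clear hf f hne havail avail
  have hsplit := Finset.card_filter_add_card_filter_not
    (s := properColorings G L) (p := fun c => c v = i)
  set a := ((properColorings G L).filter (fun c => c v = i)).card with ha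
  set b := ((properColorings G L).filter (fun c => ¬ c v = i)).card with hb
  set n := (properColorings G L).card with hn
  have h2 : 2 * a ≤ n := by linarith
  constructor
  · apply div_nonneg <;> positivity
  · rcases Nat.eq_zero_or_pos n with h0 | hpos
    · have ha0 : a = 0 := Nat.le_zero.mp (by linarith)
      rw [margin, ← ha, ← hn, ha0, h0]
      norm_num
    · rw [margin, ← ha, ← hn, div_le_div_iff₀ (by exact_mod_cast hpos) (by norm_num), one_mul]
      exact_mod_cast (by linarith : a * 2 ≤ n)
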